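/- Let (X,d) be a sequentially Yoneda-complete T1 bounded quasi-metric space. Then for all K₁, K₂ ∈ K_0(X), D(K₁*, K₂*) = H_d(K₁, K₂); that is, the map φ(K) = K* is an isometry from (K_0(X), H_d) into (CBX, D). -/

import Mathlib

open scoped NNReal

/-! Generic sequence notions for an arbitrary "distance" function `ρ`. -/

def IsCauchySeq {α : Type _} (ρ : α → α → ℝ) (u : ℕ → α) : Prop :=
  ∀ ε : ℝ, 0 < ε → ∃ N, ∀ n m, N ≤ n → n ≤ m → ρ (u n) (u m) < ε

def IsBiCauchySeq {α : Type _} (ρ : α → α → ℝ) (u : ℕ → α) : Prop :=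
  ∀ ε : ℝ, 0 < ε → ∃ N, ∀ n m, N ≤ n → N ≤ m → ρ (u n) (u m) < ε

/-- `sup_{m ≥ n} ρ (u m) y`. -/
noncomputable def supTail {α : Type _} (ρ : α → α → ℝ) (u : ℕ → α) (y : α) (n : ℕ) : ℝ :=
  sSup {t | ∃ m, n ≤ m ∧ t = ρ (u m) y}

/-- `x` is a Yoneda limit of `u`:  `ρ x y = inf_n sup_{m ≥ n} ρ (u m) y` for all `y`. -/
def IsYonedaLim {α : Type _} (ρ : α → α → ℝ) (u : ℕ → α) (x : α) : Prop :=
  ∀ y, ρ x y = sInf (Set.range (supTail ρ u y))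

def SeqYonedaCompleteD {α : Type _} (ρ : α → α → ℝ) : Prop :=
  ∀ u, IsCauchySeq ρ u → ∃ x, IsYonedaLim ρ u x

/-- Smyth completeness: every Cauchy sequence converges in the symmetrized metric. -/
def SmythCompleteD {α : Type _} (ρ : α → α → ℝ) : Prop :=
  ∀ u, IsCauchySeq ρ u → ∃ x, ∀ ε : ℝ, 0 < ε → ∃ N, ∀ n, N ≤ n →
    max (ρ x (u n)) (ρ (u n) x) < ε

/-- `inf_{m ≥ n} ρ e (u m)`. -/
noncomputable def infTail {α : Type _} (ρ : α → α → ℝ) (u : ℕ → α) (e : α) (n : ℕ) : ℝ :=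
  sInf {t | ∃ m, n ≤ m ∧ t = ρ e (u m)}

/-- `e` is a finite point: for every Cauchy sequence `u` with Yoneda limit `x`,
`ρ e x = sup_n inf_{m ≥ n} ρ e (u m)`. -/
def IsFinitePoint {α : Type _} (ρ : α → α → ℝ) (e : α) : Prop :=
  ∀ u x, IsCauchySeq ρ u → IsYonedaLim ρ u x →
    ρ e x = sSup (Set.range (infTail ρ u e))

/-- ω-algebraic: a countable set of finite points such that every point is a Yoneda limit
of a Cauchy sequence of points from it. -/
def OmegaAlgebraicD {α : Type _} (ρ : α → α → ℝ) : Prop :=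
  ∃ X0 : Set α, X0.Countable ∧ (∀ e ∈ X0, IsFinitePoint ρ e) ∧
    ∀ x, ∃ u : ℕ → α, (∀ n, u n ∈ X0) ∧ IsCauchySeq ρ u ∧ IsYonedaLim ρ u x

/-- A quasi-metric on `X`. -/
structure QuasiMetric (X : Type _) : Type _ where
  d : X → X → ℝ
  nonneg : ∀ x y, 0 ≤ d x y
  triangle : ∀ x y z, d x z ≤ d x y + d y z
  eq_iff : ∀ x y, x = y ↔ d x y = 0 ∧ d y x = 0

/-- Formal balls over `X`. -/
abbrev FB (X : Type _) := X × ℝ≥0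

/-- Nonempty finite subsets of the space of formal balls. -/
def PFin (X : Type _) : Type _ := {F : Set (FB X) // F.Finite ∧ F.Nonempty}

namespace QuasiMetric

variable {X : Type _} (Q : QuasiMetric X)

def IsT1 : Prop := ∀ x y, Q.d x y = 0 → x = y

def Bounded : Prop := ∃ C : ℝ, ∀ x y, Q.d x y ≤ C

def ball (x : X) (ε : ℝ) : Set X := {y | Q.d x y < ε}

/-- The topology `τ_d` induced by the quasi-metric. -/
def tau : TopologicalSpace X :=
  TopologicalSpace.generateFrom {s | ∃ x ε, 0 < ε ∧ s = Q.ball x ε}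

def dstar (x y : X) : ℝ := max (Q.d x y) (Q.d y x)

def SeqYonedaComplete : Prop := SeqYonedaCompleteD Q.d

def SmythComplete : Prop := SmythCompleteD Q.d

/-- `K` is `d⁻¹`-precompact. -/
def dInvPrecompact (K : Set X) : Prop :=
  ∀ ε : ℝ, 0 < ε → ∃ F : Set X, F.Finite ∧ F ⊆ K ∧ ∀ k ∈ K, ∃ x ∈ F, Q.d k x < ε

/-- The nonempty compact subsets of `(X, τ_d)`. -/
def K0 : Set (Set X) := {K | K.Nonempty ∧ @IsCompact X Q.tau K}

noncomputable def dPtSet (x : X) (B : Set X) : ℝ := sInf {t | ∃ b ∈ B, t = Q.d x b}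

noncomputable def dSetPt (A : Set X) (y : X) : ℝ := sInf {t | ∃ a ∈ A, t = Q.d a y}

/-- The Hausdorff quasi-metric. -/
noncomputable def Hd (A B : Set X) : ℝ :=
  max (sSup {t | ∃ b ∈ B, t = Q.dSetPt A b}) (sSup {t | ∃ a ∈ A, t = Q.dPtSet a B})

/-- Order on formal balls: `(x,r) ⊑ (y,s)  ↔  d x y ≤ r - s`. -/
def ble (a b : FB X) : Prop := Q.d a.1 b.1 ≤ (a.2 : ℝ) - (b.2 : ℝ)

/-- Auxiliary relation: `(x,r) ≺ (y,s)  ↔  d x y < r - s`. -/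
def blt (a b : FB X) : Prop := Q.d a.1 b.1 < (a.2 : ℝ) - (b.2 : ℝ)

def iota (x : X) : FB X := (x, 0)

/-- The quasi-metric `q` on formal balls. -/
noncomputable def q (a b : FB X) : ℝ :=
  max (Q.d a.1 b.1) |(a.2 : ℝ) - (b.2 : ℝ)| + ((b.2 : ℝ) - (a.2 : ℝ))

/-- The Egli–Milner relation `≺_EM` on nonempty finite sets of formal balls. -/
def em (F G : PFin X) : Prop :=
  (∀ b ∈ G.1, ∃ a ∈ F.1, Q.blt a b) ∧ (∀ a ∈ F.1, ∃ b ∈ G.1, Q.blt a b)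

/-- The non-strict Egli–Milner relation `⊑_EM`. -/
def emLE (F G : PFin X) : Prop :=
  (∀ a ∈ F.1, ∃ b ∈ G.1, Q.ble a b) ∧ (∀ b ∈ G.1, ∃ a ∈ F.1, Q.ble a b)

/-- `rF = max { r : (x,r) ∈ F }`. -/
noncomputable def rF (F : PFin X) : ℝ := sSup {t | ∃ p ∈ F.1, t = (p.2 : ℝ)}

/-- `δ(F,G) = min {(r-s) - d x y : (x,r) ∈ F, (y,s) ∈ G, (x,r) ≺ (y,s)}`. -/
noncomputable def delta (F G : PFin X) : ℝ :=
  sInf {t | ∃ a ∈ F.1, ∃ b ∈ G.1, Q.blt a b ∧ t = ((a.2 : ℝ) - (b.2 : ℝ)) - Q.d a.1 b.1}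

/-- The Hausdorff quasi-metric `H_q` on `P_fin(BX)` induced by `q`. -/
noncomputable def Hq (F G : PFin X) : ℝ :=
  max (sSup {t | ∃ a ∈ F.1, t = sInf {s | ∃ b ∈ G.1, s = Q.q a b}})
      (sSup {t | ∃ b ∈ G.1, t = sInf {s | ∃ a ∈ F.1, s = Q.q a b}})

/-- ω-chains in `(P_fin(BX), ≺_EM)`; `c n` plays the role of `F_{n+1}`. -/
def Chain : Type _ := {c : ℕ → PFin X // ∀ n, Q.em (c n) (c (n + 1))}

def chainLE (c c' : Q.Chain) : Prop := ∀ n, ∃ m, Q.em (c.1 n) (c'.1 m)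

def chainEquiv (c c' : Q.Chain) : Prop := Q.chainLE c c' ∧ Q.chainLE c' c

lemma blt_trans {a b c : FB X} (h1 : Q.blt a b) (h2 : Q.blt b c) : Q.blt a c := by
  have h3 := Q.triangle a.1 b.1 c.1
  unfold blt at h1 h2 ⊢
  linarith

lemma em_trans {F G H : PFin X} (h1 : Q.em F G) (h2 : Q.em G H) : Q.em F H := by
  constructor
  · intro b hb
    obtain ⟨a, ha, hab⟩ := h2.1 b hb
    obtain ⟨a', ha', h'⟩ := h1.1 a ha
    exact ⟨a', ha', Q.blt_trans h' hab⟩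
  · intro a ha
    obtain ⟨b, hb, hab⟩ := h1.2 a ha
    obtain ⟨c, hc, hbc⟩ := h2.2 b hb
    exact ⟨c, hc, Q.blt_trans hab hbc⟩

lemma chainLE_refl (c : Q.Chain) : Q.chainLE c c := fun n => ⟨n + 1, c.2 n⟩

lemma chainLE_trans {a b c : Q.Chain} (h1 : Q.chainLE a b) (h2 : Q.chainLE b c) :
    Q.chainLE a c := by
  intro n
  obtain ⟨m, hm⟩ := h1 n
  obtain ⟨k, hk⟩ := h2 m
  exact ⟨k, Q.em_trans hm hk⟩

def chainSetoid : Setoid Q.Chain where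
  r := Q.chainEquiv
  iseqv := ⟨fun c => ⟨Q.chainLE_refl c, Q.chainLE_refl c⟩,
    fun h => ⟨h.2, h.1⟩,
    fun h1 h2 => ⟨Q.chainLE_trans h1.1 h2.1, Q.chainLE_trans h2.2 h1.2⟩⟩

/-- The ω-Plotkin domain `CBX`: equivalence classes of ω-chains in `(P_fin(BX), ≺_EM)`. -/
def CBX : Type _ := Quotient Q.chainSetoid

/-- The partial order of `CBX`. -/
def cbLE : Q.CBX → Q.CBX → Prop :=
  Quotient.lift₂ Q.chainLE (by
    intro a b a' b' ha hb
    have ha' : Q.chainEquiv a a' := ha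
    have hb' : Q.chainEquiv b b' := hb
    exact propext ⟨fun h => Q.chainLE_trans (Q.chainLE_trans ha'.2 h) hb'.1,
      fun h => Q.chainLE_trans (Q.chainLE_trans ha'.1 h) hb'.2⟩)

def chainWB (c c' : Q.Chain) : Prop := ∃ m, ∀ n, Q.em (c.1 n) (c'.1 m)

/-- The way-below relation of `CBX`. -/
def cbWB : Q.CBX → Q.CBX → Prop :=
  Quotient.lift₂ Q.chainWB (by
    intro a b a' b' ha hb
    have ha' : Q.chainEquiv a a' := ha
    have hb' : Q.chainEquiv b b' := hb
    apply propext
    constructor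
    · rintro ⟨m, hm⟩
      obtain ⟨k, hk⟩ := hb'.1 m
      refine ⟨k, fun n => ?_⟩
      obtain ⟨p, hp⟩ := ha'.2 n
      exact Q.em_trans hp (Q.em_trans (hm p) hk)
    · rintro ⟨m, hm⟩
      obtain ⟨k, hk⟩ := hb'.2 m
      refine ⟨k, fun n => ?_⟩
      obtain ⟨p, hp⟩ := ha'.1 n
      exact Q.em_trans hp (Q.em_trans (hm p) hk))

/-- The Scott topology of `CBX`, generated by the sets `↟I`. -/
def scottTop : TopologicalSpace Q.CBX :=
  TopologicalSpace.generateFrom {s | ∃ I : Q.CBX, s = {J | Q.cbWB I J}}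

def upSet (F : PFin X) : Set (FB X) := {b | ∃ a ∈ F.1, Q.ble a b}

/-- `I⁺ = ⋂_n ↑F_n` for a representing chain. -/
def Iplus (c : Q.Chain) : Set (FB X) := ⋂ n, Q.upSet (c.1 n)

noncomputable def IplusQ (I : Q.CBX) : Set (FB X) := Q.Iplus (Quotient.out I)

/-- `r̄ I = inf { rF : F occurs in some chain representing I }`. -/
noncomputable def rbar (I : Q.CBX) : ℝ :=
  sInf {t | ∃ c : Q.Chain, Quotient.mk Q.chainSetoid c = I ∧ ∃ n, t = rF (c.1 n)}

/-- `c` is a standard representation of `K`: `c n` (playing the role of `F_{n+1}`) is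
`{(x_i^j, 1/(n+1)) : 1 ≤ j ≤ n+1, 1 ≤ i ≤ m_j}` where the `x_i^j ∈ K` satisfy
`∀ y ∈ K, ∃ i, d (x_i^j) y < 1/(2 j²)`. -/
def IsStdRep (K : Set X) (c : Q.Chain) : Prop :=
  ∃ (m : ℕ → ℕ) (x : ℕ → ℕ → X),
    (∀ j i, 1 ≤ j → 1 ≤ i → i ≤ m j → x j i ∈ K) ∧
    (∀ j, 1 ≤ j → ∀ y ∈ K, ∃ i, 1 ≤ i ∧ i ≤ m j ∧ Q.d (x j i) y < 1 / (2 * (j : ℝ) ^ 2)) ∧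
    (∀ n : ℕ, (c.1 n).1 =
      {p : FB X | ∃ j i, 1 ≤ j ∧ j ≤ n + 1 ∧ 1 ≤ i ∧ i ≤ m j ∧
        p = (x j i, ((n : ℝ≥0) + 1)⁻¹)})

/-- `D` on representing chains: `sup_n inf_m H_q(F_n, G_m)`. -/
noncomputable def Dchain (c c' : Q.Chain) : ℝ :=
  sSup {t | ∃ n, t = sInf {s | ∃ m, s = Q.Hq (c.1 n) (c'.1 m)}}

/-- The quasi-metric `D` on `CBX`. -/
noncomputable def D (I J : Q.CBX) : ℝ := Q.Dchain (Quotient.out I) (Quotient.out J)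

/-- The topology induced by `D` on `CBX`. -/
def DTop : TopologicalSpace Q.CBX :=
  TopologicalSpace.generateFrom
    {s | ∃ (I : Q.CBX) (ε : ℝ), 0 < ε ∧ s = {J | Q.D I J < ε}}

/-- The hyperspace `K_0(X)` as a type. -/
def K0T : Type _ := {K : Set X // K.Nonempty ∧ @IsCompact X Q.tau K}

/-- The Vietoris topology on `K_0(X)`. -/
def vietoris : TopologicalSpace Q.K0T :=
  TopologicalSpace.generateFrom
    ({s | ∃ V : Set X, @IsOpen X Q.tau V ∧ s = {K : Q.K0T | (K.1 ∩ V).Nonempty}} ∪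
     {s | ∃ V : Set X, @IsOpen X Q.tau V ∧ s = {K : Q.K0T | K.1 ⊆ V}})

/-- The topology of the Hausdorff quasi-metric on `K_0(X)`. -/
def hdTop : TopologicalSpace Q.K0T :=
  TopologicalSpace.generateFrom
    {s | ∃ (K : Q.K0T) (ε : ℝ), 0 < ε ∧ s = {L : Q.K0T | Q.Hd K.1 L.1 < ε}}

/-- Round ideals of `(P_fin(BX), ≺_EM)`. -/
def IsRoundIdeal (I : Set (PFin X)) : Prop :=
  I.Nonempty ∧ (∀ F G : PFin X, Q.em F G → G ∈ I → F ∈ I) ∧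
  (∀ F ∈ I, ∀ G ∈ I, ∃ H ∈ I, Q.em F H ∧ Q.em G H)

end QuasiMetric

namespace QuasiMetric

section Helpers

variable {X : Type _} (Q : QuasiMetric X)

lemma d_nonneg' (x y : X) : 0 ≤ Q.d x y := Q.nonneg x y

lemma d_self' (x : X) : Q.d x x = 0 := ((Q.eq_iff x x).1 rfl).1

lemma img_eq (S : Set (FB X)) (g : FB X → ℝ) : {t | ∃ a ∈ S, t = g a} = g '' S := by
  ext t; simp [Set.mem_image, eq_comm]

lemma img_ne (F : PFin X) (g : FB X → ℝ) : {t | ∃ a ∈ F.1, t = g a}.Nonempty := by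
  obtain ⟨a, ha⟩ := F.2.2; exact ⟨g a, a, ha, rfl⟩

lemma img_bddAbove (F : PFin X) (g : FB X → ℝ) : BddAbove {t | ∃ a ∈ F.1, t = g a} := by
  rw [img_eq]; exact (F.2.1.image g).bddAbove

lemma img_bddBelow (F : PFin X) (g : FB X → ℝ) : BddBelow {t | ∃ a ∈ F.1, t = g a} := by
  rw [img_eq]; exact (F.2.1.image g).bddBelow

lemma q_nonneg (a b : FB X) : 0 ≤ Q.q a b := by
  unfold q
  have h1 : |(a.2 : ℝ) - (b.2 : ℝ)| ≤ max (Q.d a.1 b.1) |(a.2 : ℝ) - (b.2 : ℝ)| := le_max_right _ _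
  have h2 : (a.2 : ℝ) - (b.2 : ℝ) ≤ |(a.2 : ℝ) - (b.2 : ℝ)| := le_abs_self _
  linarith

lemma q_ge_d (a b : FB X) : Q.d a.1 b.1 + ((b.2 : ℝ) - (a.2 : ℝ)) ≤ Q.q a b :=
  add_le_add_left (le_max_left _ _) _

/-- If `a ⊑ a'` then `q a b ≤ q a' b`. -/
lemma q_mono_left {a a' : FB X} (h : Q.ble a a') (b : FB X) : Q.q a b ≤ Q.q a' b := by
  unfold ble at h
  unfold q
  have htri := Q.triangle a.1 a'.1 b.1
  have h0 := Q.nonneg a.1 a'.1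
  have hd : Q.d a.1 b.1 ≤ Q.d a'.1 b.1 + ((a.2 : ℝ) - (a'.2 : ℝ)) := by linarith
  have habs : |(a.2 : ℝ) - (b.2 : ℝ)| ≤ |(a'.2 : ℝ) - (b.2 : ℝ)| + ((a.2 : ℝ) - (a'.2 : ℝ)) := by
    rw [abs_le]
    constructor
    · have := neg_abs_le ((a'.2 : ℝ) - (b.2 : ℝ)); linarith
    · have := le_abs_self ((a'.2 : ℝ) - (b.2 : ℝ)); linarith
  have hmax : max (Q.d a.1 b.1) |(a.2 : ℝ) - (b.2 : ℝ)| ≤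
      max (Q.d a'.1 b.1) |(a'.2 : ℝ) - (b.2 : ℝ)| + ((a.2 : ℝ) - (a'.2 : ℝ)) := by
    apply max_le
    · exact hd.trans (by gcongr; exact le_max_left _ _)
    · exact habs.trans (by gcongr; exact le_max_right _ _)
  linarith

/-- If `b ⊑ b'` then `q a b' ≤ q a b`. -/
lemma q_mono_right {b b' : FB X} (h : Q.ble b b') (a : FB X) : Q.q a b' ≤ Q.q a b := by
  unfold ble at h
  unfold q
  have htri := Q.triangle a.1 b.1 b'.1
  have h0 := Q.nonneg b.1 b'.1
  have hd : Q.d a.1 b'.1 ≤ Q.d a.1 b.1 + ((b.2 : ℝ) - (b'.2 : ℝ)) := by linarith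
  have habs : |(a.2 : ℝ) - (b'.2 : ℝ)| ≤ |(a.2 : ℝ) - (b.2 : ℝ)| + ((b.2 : ℝ) - (b'.2 : ℝ)) := by
    rw [abs_le]
    constructor
    · have := neg_abs_le ((a.2 : ℝ) - (b.2 : ℝ)); linarith
    · have := le_abs_self ((a.2 : ℝ) - (b.2 : ℝ)); linarith
  have hmax : max (Q.d a.1 b'.1) |(a.2 : ℝ) - (b'.2 : ℝ)| ≤
      max (Q.d a.1 b.1) |(a.2 : ℝ) - (b.2 : ℝ)| + ((b.2 : ℝ) - (b'.2 : ℝ)) := by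
    apply max_le
    · exact hd.trans (by gcongr; exact le_max_left _ _)
    · exact habs.trans (by gcongr; exact le_max_right _ _)
  linarith

lemma ble_of_blt {a b : FB X} (h : Q.blt a b) : Q.ble a b := le_of_lt h

lemma emLE_of_em {F G : PFin X} (h : Q.em F G) : Q.emLE F G :=
  ⟨fun a ha => (h.2 a ha).imp fun b hb => ⟨hb.1, Q.ble_of_blt hb.2⟩,
   fun b hb => (h.1 b hb).imp fun a ha => ⟨ha.1, Q.ble_of_blt ha.2⟩⟩

end Helpers

end QuasiMetric

namespace QuasiMetric

section Helpers2

variable {X : Type _} (Q : QuasiMetric X)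

lemma inner_le_Hq₁ (F G : PFin X) {a : FB X} (ha : a ∈ F.1) :
    sInf {s | ∃ b ∈ G.1, s = Q.q a b} ≤ Q.Hq F G := by
  unfold Hq
  refine le_trans (le_csSup (img_bddAbove F (fun a => sInf {s | ∃ b ∈ G.1, s = Q.q a b}))
    ⟨a, ha, rfl⟩) (le_max_left _ _)

lemma inner_le_Hq₂ (F G : PFin X) {b : FB X} (hb : b ∈ G.1) :
    sInf {s | ∃ a ∈ F.1, s = Q.q a b} ≤ Q.Hq F G := by
  unfold Hq
  refine le_trans (le_csSup (img_bddAbove G (fun b => sInf {s | ∃ a ∈ F.1, s = Q.q a b}))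
    ⟨b, hb, rfl⟩) (le_max_right _ _)

lemma Hq_le {F G : PFin X} {B : ℝ}
    (h1 : ∀ a ∈ F.1, ∃ b ∈ G.1, Q.q a b ≤ B)
    (h2 : ∀ b ∈ G.1, ∃ a ∈ F.1, Q.q a b ≤ B) : Q.Hq F G ≤ B := by
  unfold Hq
  apply max_le
  · apply csSup_le (img_ne F _)
    rintro t ⟨a, ha, rfl⟩
    obtain ⟨b, hb, hq⟩ := h1 a ha
    exact le_trans (csInf_le (img_bddBelow G _) ⟨b, hb, rfl⟩) hq
  · apply csSup_le (img_ne G _)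
    rintro t ⟨b, hb, rfl⟩
    obtain ⟨a, ha, hq⟩ := h2 b hb
    exact le_trans (csInf_le (img_bddBelow F _) ⟨a, ha, rfl⟩) hq

lemma le_Hq_left {F G : PFin X} {a : FB X} {B : ℝ} (ha : a ∈ F.1)
    (h : ∀ b ∈ G.1, B ≤ Q.q a b) : B ≤ Q.Hq F G := by
  have h1 : B ≤ sInf {s | ∃ b ∈ G.1, s = Q.q a b} := by
    apply le_csInf (img_ne G _)
    rintro s ⟨b, hb, rfl⟩; exact h b hb
  exact h1.trans (Q.inner_le_Hq₁ F G ha)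

lemma le_Hq_right {F G : PFin X} {b : FB X} {B : ℝ} (hb : b ∈ G.1)
    (h : ∀ a ∈ F.1, B ≤ Q.q a b) : B ≤ Q.Hq F G := by
  have h1 : B ≤ sInf {s | ∃ a ∈ F.1, s = Q.q a b} := by
    apply le_csInf (img_ne F _)
    rintro s ⟨a, ha, rfl⟩; exact h a ha
  exact h1.trans (Q.inner_le_Hq₂ F G hb)

lemma Hq_nonneg (F G : PFin X) : 0 ≤ Q.Hq F G := by
  obtain ⟨a, ha⟩ := F.2.2
  exact Q.le_Hq_left ha (fun b _ => Q.q_nonneg a b)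

lemma Hq_le_bound {F G : PFin X} {C R₁ R₂ : ℝ} (hC : ∀ x y, Q.d x y ≤ C) (hC0 : 0 ≤ C)
    (h₁ : ∀ p ∈ F.1, (p.2 : ℝ) ≤ R₁) (h₂ : ∀ p ∈ G.1, (p.2 : ℝ) ≤ R₂) :
    Q.Hq F G ≤ C + R₁ + 2 * R₂ := by
  have hq : ∀ a ∈ F.1, ∀ b ∈ G.1, Q.q a b ≤ C + R₁ + 2 * R₂ := by
    intro a ha b hb
    have h1 := h₁ a ha; have h2 := h₂ b hb
    have ha0 : (0 : ℝ) ≤ (a.2 : ℝ) := (a.2).2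
    have hb0 : (0 : ℝ) ≤ (b.2 : ℝ) := (b.2).2
    have habs : |(a.2 : ℝ) - (b.2 : ℝ)| ≤ R₁ + R₂ := by
      rw [abs_le]; constructor <;> linarith
    have hd : Q.d a.1 b.1 ≤ C := hC _ _
    have : max (Q.d a.1 b.1) |(a.2 : ℝ) - (b.2 : ℝ)| ≤ C + R₁ + R₂ := by
      apply max_le <;> linarith
    unfold q; linarith
  obtain ⟨a, ha⟩ := F.2.2
  obtain ⟨b, hb⟩ := G.2.2
  exact Q.Hq_le (fun a' ha' => ⟨b, hb, hq a' ha' b hb⟩) (fun b' hb' => ⟨a, ha, hq a ha b' hb'⟩)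

lemma Hq_mono_left {F F' G : PFin X} (h : Q.emLE F F') : Q.Hq F G ≤ Q.Hq F' G := by
  apply max_le
  · apply csSup_le (img_ne F _)
    rintro t ⟨a, ha, rfl⟩
    obtain ⟨a', ha', hle⟩ := h.1 a ha
    have h1 : sInf {s | ∃ b ∈ G.1, s = Q.q a b} ≤ sInf {s | ∃ b ∈ G.1, s = Q.q a' b} := by
      apply le_csInf (img_ne G _)
      rintro s ⟨b, hb, rfl⟩
      exact (csInf_le (img_bddBelow G _) ⟨b, hb, rfl⟩).trans (Q.q_mono_left hle b)
    exact h1.trans (Q.inner_le_Hq₁ F' G ha')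
  · apply csSup_le (img_ne G _)
    rintro t ⟨b, hb, rfl⟩
    have h1 : sInf {s | ∃ a ∈ F.1, s = Q.q a b} ≤ sInf {s | ∃ a ∈ F'.1, s = Q.q a b} := by
      apply le_csInf (img_ne F' _)
      rintro s ⟨a', ha', rfl⟩
      obtain ⟨a, ha, hle⟩ := h.2 a' ha'
      exact (csInf_le (img_bddBelow F _) ⟨a, ha, rfl⟩).trans (Q.q_mono_left hle b)
    exact h1.trans (Q.inner_le_Hq₂ F' G hb)

lemma Hq_mono_right {F G G' : PFin X} (h : Q.emLE G G') : Q.Hq F G' ≤ Q.Hq F G := by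
  apply max_le
  · apply csSup_le (img_ne F _)
    rintro t ⟨a, ha, rfl⟩
    have h1 : sInf {s | ∃ b ∈ G'.1, s = Q.q a b} ≤ sInf {s | ∃ b ∈ G.1, s = Q.q a b} := by
      apply le_csInf (img_ne G _)
      rintro s ⟨b, hb, rfl⟩
      obtain ⟨b', hb', hle⟩ := h.1 b hb
      exact (csInf_le (img_bddBelow G' _) ⟨b', hb', rfl⟩).trans (Q.q_mono_right hle a)
    exact h1.trans (Q.inner_le_Hq₁ F G ha)
  · apply csSup_le (img_ne G' _)
    rintro t ⟨b', hb', rfl⟩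
    obtain ⟨b, hb, hle⟩ := h.2 b' hb'
    have h1 : sInf {s | ∃ a ∈ F.1, s = Q.q a b'} ≤ sInf {s | ∃ a ∈ F.1, s = Q.q a b} := by
      apply le_csInf (img_ne F _)
      rintro s ⟨a, ha, rfl⟩
      exact (csInf_le (img_bddBelow F _) ⟨a, ha, rfl⟩).trans (Q.q_mono_right hle a)
    exact h1.trans (Q.inner_le_Hq₂ F G hb)

end Helpers2

end QuasiMetric

namespace QuasiMetric

section Helpers3

variable {X : Type _} (Q : QuasiMetric X)

lemma ball_open (x : X) {ε : ℝ} (hε : 0 < ε) : @IsOpen X Q.tau (Q.ball x ε) := by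
  show TopologicalSpace.GenerateOpen _ _
  exact TopologicalSpace.GenerateOpen.basic _ ⟨x, ε, hε, rfl⟩

lemma mem_ball_self (x : X) {ε : ℝ} (hε : 0 < ε) : x ∈ Q.ball x ε := by
  show Q.d x x < ε
  rw [Q.d_self']; exact hε

/-- Cluster-point lemma: if `u` is a sequence in a `τ_d`-compact set `K` with
`d (u n) k → 0`, then for every `δ > 0` there are arbitrarily large `n` with
`d k (u n) < δ`. -/
lemma cluster (hT1 : Q.IsT1) {K : Set X} (hK : @IsCompact X Q.tau K)
    (u : ℕ → X) (hu : ∀ n, u n ∈ K) (k : X)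
    (hconv : ∀ δ : ℝ, 0 < δ → ∃ N, ∀ n, N ≤ n → Q.d (u n) k < δ) :
    ∀ δ : ℝ, 0 < δ → ∀ N, ∃ n, N ≤ n ∧ Q.d k (u n) < δ := by
  letI := Q.tau
  have hmapne : (Filter.map u Filter.atTop).NeBot := Filter.map_neBot
  have hle : Filter.map u Filter.atTop ≤ Filter.principal K := by
    rw [Filter.le_principal_iff]
    exact Filter.mem_map.2 (Filter.Eventually.of_forall hu)
  obtain ⟨z, hzK, hz⟩ := hK.exists_clusterPt hle
  have hfreq : ∀ (ε : ℝ), 0 < ε → ∀ N : ℕ, ∃ n, N ≤ n ∧ Q.d z (u n) < ε := by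
    intro ε hε N
    have hU : Q.ball z ε ∈ nhds z := (Q.ball_open z hε).mem_nhds (Q.mem_ball_self z hε)
    have hV : u '' Set.Ici N ∈ Filter.map u Filter.atTop := by
      apply Filter.mem_map.2
      filter_upwards [Filter.Ici_mem_atTop N] with n hn
      exact ⟨n, hn, rfl⟩
    obtain ⟨y, hy1, hy2⟩ := (clusterPt_iff_nonempty.1 hz) hU hV
    obtain ⟨n, hn, rfl⟩ := hy2
    exact ⟨n, hn, hy1⟩
  have hzk : z = k := by
    apply hT1
    by_contra hne
    have hpos : 0 < Q.d z k := lt_of_le_of_ne (Q.nonneg z k) (Ne.symm hne)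
    obtain ⟨N, hN⟩ := hconv (Q.d z k / 2) (by linarith)
    obtain ⟨n, hn, hlt⟩ := hfreq (Q.d z k / 2) (by linarith) N
    have := Q.triangle z (u n) k
    have := hN n hn
    linarith
  intro δ hδ N
  obtain ⟨n, hn, hlt⟩ := hfreq δ hδ N
  exact ⟨n, hn, hzk ▸ hlt⟩

lemma chain_rad (c : Q.Chain) : ∃ R : ℝ, 0 ≤ R ∧ ∀ n, ∀ p ∈ (c.1 n).1, (p.2 : ℝ) ≤ R := by
  set S := {t | ∃ p ∈ (c.1 0).1, t = (p.2 : ℝ)} with hS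
  have hSne : S.Nonempty := by
    obtain ⟨p, hp⟩ := (c.1 0).2.2; exact ⟨(p.2 : ℝ), p, hp, rfl⟩
  have hSbdd : BddAbove S := by
    have : S = (fun p : FB X => (p.2 : ℝ)) '' (c.1 0).1 := by
      ext t; simp [hS, Set.mem_image, eq_comm]
    rw [this]; exact ((c.1 0).2.1.image _).bddAbove
  refine ⟨sSup S, ?_, ?_⟩
  · obtain ⟨p, hp⟩ := (c.1 0).2.2
    exact le_trans (p.2).2 (le_csSup hSbdd ⟨p, hp, rfl⟩)
  · intro n
    induction n with
    | zero => intro p hp; exact le_csSup hSbdd ⟨p, hp, rfl⟩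
    | succ n ih =>
      intro p hp
      obtain ⟨a, ha, hab⟩ := (c.2 n).1 p hp
      have h1 : Q.d a.1 p.1 < (a.2 : ℝ) - (p.2 : ℝ) := hab
      have h2 := Q.nonneg a.1 p.1
      have := ih a ha
      linarith

lemma Dchain_inner_nonneg (c c' : Q.Chain) (n : ℕ) :
    0 ≤ sInf {s | ∃ m, s = Q.Hq (c.1 n) (c'.1 m)} :=
  Real.sInf_nonneg (by rintro s ⟨m, rfl⟩; exact Q.Hq_nonneg _ _)

lemma Dchain_inner_bddBelow (c c' : Q.Chain) (n : ℕ) :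
    BddBelow {s | ∃ m, s = Q.Hq (c.1 n) (c'.1 m)} :=
  ⟨0, by rintro s ⟨m, rfl⟩; exact Q.Hq_nonneg _ _⟩

lemma Dchain_outer_bddAbove {C : ℝ} (hC : ∀ x y, Q.d x y ≤ C) (hC0 : 0 ≤ C) (c c' : Q.Chain) :
    BddAbove {t | ∃ n, t = sInf {s | ∃ m, s = Q.Hq (c.1 n) (c'.1 m)}} := by
  obtain ⟨R₁, hR₁0, hR₁⟩ := Q.chain_rad c
  obtain ⟨R₂, hR₂0, hR₂⟩ := Q.chain_rad c'
  refine ⟨C + R₁ + 2 * R₂, ?_⟩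
  rintro t ⟨n, rfl⟩
  exact le_trans (csInf_le (Q.Dchain_inner_bddBelow c c' n) ⟨0, rfl⟩)
    (Q.Hq_le_bound hC hC0 (hR₁ n) (hR₂ 0))

lemma Dchain_nonneg (c c' : Q.Chain) {C : ℝ} (hC : ∀ x y, Q.d x y ≤ C) (hC0 : 0 ≤ C) :
    0 ≤ Q.Dchain c c' :=
  le_trans (Q.Dchain_inner_nonneg c c' 0)
    (le_csSup (Q.Dchain_outer_bddAbove hC hC0 c c') ⟨0, rfl⟩)

lemma le_Dchain (c c' : Q.Chain) {C : ℝ} (hC : ∀ x y, Q.d x y ≤ C) (hC0 : 0 ≤ C)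
    {B : ℝ} {n : ℕ} (h : B ≤ sInf {s | ∃ m, s = Q.Hq (c.1 n) (c'.1 m)}) :
    B ≤ Q.Dchain c c' :=
  h.trans (le_csSup (Q.Dchain_outer_bddAbove hC hC0 c c') ⟨n, rfl⟩)

lemma Dchain_le_left (c ct c' : Q.Chain) {C : ℝ} (hC : ∀ x y, Q.d x y ≤ C) (hC0 : 0 ≤ C)
    (h : Q.chainLE c ct) : Q.Dchain c c' ≤ Q.Dchain ct c' := by
  apply Real.sSup_le _ (Q.Dchain_nonneg ct c' hC hC0)
  rintro t ⟨n, rfl⟩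
  obtain ⟨k, hk⟩ := h n
  have h1 : sInf {s | ∃ m, s = Q.Hq (c.1 n) (c'.1 m)} ≤
      sInf {s | ∃ m, s = Q.Hq (ct.1 k) (c'.1 m)} := by
    refine le_csInf ⟨_, ⟨0, rfl⟩⟩ ?_
    rintro s ⟨m, rfl⟩
    exact le_trans (csInf_le (Q.Dchain_inner_bddBelow c c' n) ⟨m, rfl⟩)
      (Q.Hq_mono_left (Q.emLE_of_em hk))
  exact Q.le_Dchain ct c' hC hC0 h1

lemma Dchain_le_right (c c' ct' : Q.Chain) {C : ℝ} (hC : ∀ x y, Q.d x y ≤ C) (hC0 : 0 ≤ C)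
    (h : Q.chainLE c' ct') : Q.Dchain c ct' ≤ Q.Dchain c c' := by
  apply Real.sSup_le _ (Q.Dchain_nonneg c c' hC hC0)
  rintro t ⟨n, rfl⟩
  have h1 : sInf {s | ∃ m, s = Q.Hq (c.1 n) (ct'.1 m)} ≤
      sInf {s | ∃ m, s = Q.Hq (c.1 n) (c'.1 m)} := by
    refine le_csInf ⟨_, ⟨0, rfl⟩⟩ ?_
    rintro s ⟨m, rfl⟩
    obtain ⟨k, hk⟩ := h m
    exact le_trans (csInf_le (Q.Dchain_inner_bddBelow c ct' n) ⟨k, rfl⟩)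
      (Q.Hq_mono_right (Q.emLE_of_em hk))
  exact Q.le_Dchain c c' hC hC0 h1

lemma Dchain_congr {c ct c' ct' : Q.Chain} {C : ℝ} (hC : ∀ x y, Q.d x y ≤ C) (hC0 : 0 ≤ C)
    (h1 : Q.chainEquiv c ct) (h2 : Q.chainEquiv c' ct') :
    Q.Dchain c c' = Q.Dchain ct ct' := by
  apply le_antisymm
  · exact le_trans (Q.Dchain_le_left c ct c' hC hC0 h1.1)
      (Q.Dchain_le_right ct ct' c' hC hC0 h2.2)
  · exact le_trans (Q.Dchain_le_left ct c ct' hC hC0 h1.2)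
      (Q.Dchain_le_right c c' ct' hC hC0 h2.1)

end Helpers3

end QuasiMetric

/-- `φ(K) = K*` is an isometry: `D(K₁*, K₂*) = H_d(K₁, K₂)`. -/
theorem stmt16 {X : Type} (Q : QuasiMetric X) (hT1 : Q.IsT1) (hB : Q.Bounded)
    (hY : Q.SeqYonedaComplete) (K₁ K₂ : Set X) (h1 : K₁ ∈ Q.K0) (h2 : K₂ ∈ Q.K0)
    (c₁ c₂ : Q.Chain) (hc₁ : Q.IsStdRep K₁ c₁) (hc₂ : Q.IsStdRep K₂ c₂) :
    Q.D (Quotient.mk Q.chainSetoid c₁) (Quotient.mk Q.chainSetoid c₂) = Q.Hd K₁ K₂ := by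
  classical
  obtain ⟨C₀, hC₀⟩ := hB
  obtain ⟨k₀, hk₀⟩ := h1.1
  obtain ⟨l₀, hl₀⟩ := h2.1
  set C := max C₀ 0 with hCdef
  have hC : ∀ x y, Q.d x y ≤ C := fun x y => (hC₀ x y).trans (le_max_left _ _)
  have hC0 : (0 : ℝ) ≤ C := le_max_right _ _
  -- reduce `D` to `Dchain c₁ c₂`
  have hout₁' : Q.chainSetoid.r ((Quotient.mk Q.chainSetoid c₁).out) c₁ :=
    Quotient.exact (Quotient.out_eq _)
  have hout₂' : Q.chainSetoid.r ((Quotient.mk Q.chainSetoid c₂).out) c₂ :=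
    Quotient.exact (Quotient.out_eq _)
  have hout₁ : Q.chainEquiv ((Quotient.mk Q.chainSetoid c₁).out) c₁ := hout₁'
  have hout₂ : Q.chainEquiv ((Quotient.mk Q.chainSetoid c₂).out) c₂ := hout₂'
  have hD : Q.D (Quotient.mk Q.chainSetoid c₁) (Quotient.mk Q.chainSetoid c₂) =
      Q.Dchain c₁ c₂ := Q.Dchain_congr hC hC0 hout₁ hout₂
  rw [hD]
  -- radii
  set r : ℕ → ℝ := fun n => ((n : ℝ) + 1)⁻¹ with hrdef
  have hrpos : ∀ n, 0 < r n := by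
    intro n; apply inv_pos.2; positivity
  have hrcoe : ∀ n : ℕ, ((((n : ℝ≥0) + 1)⁻¹ : ℝ≥0) : ℝ) = r n := by
    intro n; push_cast; rfl
  have hrle1 : ∀ n, r n ≤ 1 := by
    intro n
    rw [hrdef]
    have h : (1:ℝ) ≤ (n:ℝ) + 1 := by
      have := Nat.cast_nonneg (α := ℝ) n; linarith
    have := inv_anti₀ one_pos h
    simpa using this
  have hranti : ∀ n m : ℕ, n ≤ m → r m ≤ r n := by
    intro n m h
    apply inv_anti₀ (by positivity)
    have : (n : ℝ) ≤ m := Nat.cast_le.2 h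
    linarith
  have hrsmall : ∀ δ : ℝ, 0 < δ → ∃ N : ℕ, r N < δ := by
    intro δ hδ
    obtain ⟨N, hN⟩ := exists_nat_gt (1 / δ)
    refine ⟨N, ?_⟩
    rw [hrdef]
    have h1 : (1:ℝ)/δ < N := hN
    have h2 : (0:ℝ) < N + 1 := by positivity
    rw [inv_lt_iff_one_lt_mul₀ h2]
    have : 1/δ * δ < (N+1) * δ := by
      apply mul_lt_mul_of_pos_right _ hδ
      linarith
    rw [one_div_mul_cancel (ne_of_gt hδ)] at this
    linarith [this]
  -- standard representation data
  obtain ⟨m₁, x₁, hmem₁, hnet₁, hset₁⟩ := hc₁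
  obtain ⟨m₂, x₂, hmem₂, hnet₂, hset₂⟩ := hc₂
  -- facts about the sets F_n = c₁.1 n and G_m = c₂.1 m
  have hsq : ∀ n : ℕ, 1 / (2 * ((n:ℝ) + 1) ^ 2) = r n * r n / 2 := by
    intro n
    rw [hrdef]
    have : ((n:ℝ)+1) ≠ 0 := by positivity
    field_simp
  have memF : ∀ n : ℕ, ∀ p ∈ (c₁.1 n).1, p.1 ∈ K₁ ∧ (p.2 : ℝ) = r n := by
    intro n p hp
    rw [hset₁ n] at hp
    obtain ⟨j, i, hj1, hj2, hi1, hi2, rfl⟩ := hp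
    exact ⟨hmem₁ j i hj1 hi1 hi2, hrcoe n⟩
  have memG : ∀ n : ℕ, ∀ p ∈ (c₂.1 n).1, p.1 ∈ K₂ ∧ (p.2 : ℝ) = r n := by
    intro n p hp
    rw [hset₂ n] at hp
    obtain ⟨j, i, hj1, hj2, hi1, hi2, rfl⟩ := hp
    exact ⟨hmem₂ j i hj1 hi1 hi2, hrcoe n⟩
  have netF : ∀ n : ℕ, ∀ y ∈ K₁, ∃ p ∈ (c₁.1 n).1, Q.d p.1 y < r n * r n / 2 := by
    intro n y hy
    obtain ⟨i, hi1, hi2, hlt⟩ := hnet₁ (n + 1) (by omega) y hy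
    refine ⟨(x₁ (n+1) i, ((n : ℝ≥0) + 1)⁻¹), ?_, ?_⟩
    · rw [hset₁ n]; exact ⟨n+1, i, by omega, le_refl _, hi1, hi2, rfl⟩
    · have : (((n+1 : ℕ):ℝ)) = (n:ℝ) + 1 := by push_cast; ring
      rw [this] at hlt
      rw [← hsq n]
      exact hlt
  have netG : ∀ n : ℕ, ∀ y ∈ K₂, ∃ p ∈ (c₂.1 n).1, Q.d p.1 y < r n * r n / 2 := by
    intro n y hy
    obtain ⟨i, hi1, hi2, hlt⟩ := hnet₂ (n + 1) (by omega) y hy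
    refine ⟨(x₂ (n+1) i, ((n : ℝ≥0) + 1)⁻¹), ?_, ?_⟩
    · rw [hset₂ n]; exact ⟨n+1, i, by omega, le_refl _, hi1, hi2, rfl⟩
    · have : (((n+1 : ℕ):ℝ)) = (n:ℝ) + 1 := by push_cast; ring
      rw [this] at hlt
      rw [← hsq n]
      exact hlt
  have persistG : ∀ m₀ m : ℕ, m₀ ≤ m → ∀ p ∈ (c₂.1 m₀).1,
      ((p.1, ((m : ℝ≥0) + 1)⁻¹) : FB X) ∈ (c₂.1 m).1 := by
    intro m₀ m hm p hp
    rw [hset₂ m₀] at hp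
    obtain ⟨j, i, hj1, hj2, hi1, hi2, rfl⟩ := hp
    rw [hset₂ m]
    exact ⟨j, i, hj1, by omega, hi1, hi2, rfl⟩
  -- Hausdorff distance components
  set A := sSup {t | ∃ b ∈ K₂, t = Q.dSetPt K₁ b} with hAdef
  set Bv := sSup {t | ∃ a ∈ K₁, t = Q.dPtSet a K₂} with hBdef
  have hHd : Q.Hd K₁ K₂ = max A Bv := rfl
  have hdSetPt_nonneg : ∀ y, 0 ≤ Q.dSetPt K₁ y := by
    intro y; exact Real.sInf_nonneg (by rintro t ⟨a, ha, rfl⟩; exact Q.nonneg _ _)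
  have hdPtSet_nonneg : ∀ x, 0 ≤ Q.dPtSet x K₂ := by
    intro x; exact Real.sInf_nonneg (by rintro t ⟨b, hb, rfl⟩; exact Q.nonneg _ _)
  have hdSetPt_bdd : ∀ y : X, BddBelow {t | ∃ a ∈ K₁, t = Q.d a y} :=
    fun y => ⟨0, by rintro t ⟨a, ha, rfl⟩; exact Q.nonneg _ _⟩
  have hdPtSet_bdd : ∀ x : X, BddBelow {t | ∃ b ∈ K₂, t = Q.d x b} :=
    fun x => ⟨0, by rintro t ⟨b, hb, rfl⟩; exact Q.nonneg _ _⟩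
  have hdSetPt_le : ∀ y, ∀ a ∈ K₁, Q.dSetPt K₁ y ≤ Q.d a y := by
    intro y a ha; exact csInf_le (hdSetPt_bdd y) ⟨a, ha, rfl⟩
  have hdPtSet_le : ∀ x, ∀ b ∈ K₂, Q.dPtSet x K₂ ≤ Q.d x b := by
    intro x b hb; exact csInf_le (hdPtSet_bdd x) ⟨b, hb, rfl⟩
  have hAbdd : BddAbove {t | ∃ b ∈ K₂, t = Q.dSetPt K₁ b} :=
    ⟨C, by rintro t ⟨b, hb, rfl⟩; exact (hdSetPt_le b k₀ hk₀).trans (hC _ _)⟩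
  have hBbdd : BddAbove {t | ∃ a ∈ K₁, t = Q.dPtSet a K₂} :=
    ⟨C, by rintro t ⟨a, ha, rfl⟩; exact (hdPtSet_le a l₀ hl₀).trans (hC _ _)⟩
  have hAne : {t | ∃ b ∈ K₂, t = Q.dSetPt K₁ b}.Nonempty := ⟨_, l₀, hl₀, rfl⟩
  have hBne : {t | ∃ a ∈ K₁, t = Q.dPtSet a K₂}.Nonempty := ⟨_, k₀, hk₀, rfl⟩
  have hA0 : 0 ≤ A := le_trans (hdSetPt_nonneg l₀) (le_csSup hAbdd ⟨l₀, hl₀, rfl⟩)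
  have hB0 : 0 ≤ Bv := le_trans (hdPtSet_nonneg k₀) (le_csSup hBbdd ⟨k₀, hk₀, rfl⟩)
  have hALe : ∀ b ∈ K₂, Q.dSetPt K₁ b ≤ A := fun b hb => le_csSup hAbdd ⟨b, hb, rfl⟩
  have hBLe : ∀ a ∈ K₁, Q.dPtSet a K₂ ≤ Bv := fun a ha => le_csSup hBbdd ⟨a, ha, rfl⟩
  have hHd0 : 0 ≤ Q.Hd K₁ K₂ := by rw [hHd]; exact le_trans hA0 (le_max_left _ _)
  have hqle : ∀ (a b : FB X) (W : ℝ), (b.2 : ℝ) ≤ (a.2 : ℝ) →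
      Q.d a.1 b.1 + ((b.2 : ℝ) - (a.2 : ℝ)) ≤ W → 0 ≤ W → Q.q a b ≤ W := by
    intro a b W hba h1 h2
    show max (Q.d a.1 b.1) |(a.2 : ℝ) - (b.2 : ℝ)| + ((b.2 : ℝ) - (a.2 : ℝ)) ≤ W
    have habs : |(a.2 : ℝ) - (b.2 : ℝ)| = (a.2 : ℝ) - (b.2 : ℝ) := abs_of_nonneg (by linarith)
    rw [habs]
    rcases max_cases (Q.d a.1 b.1) ((a.2 : ℝ) - (b.2 : ℝ)) with ⟨hmx, _⟩ | ⟨hmx, _⟩ <;>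
      rw [hmx] <;> linarith
  apply le_antisymm
  · -- `Dchain ≤ Hd`
    apply Real.sSup_le _ hHd0
    rintro t ⟨n, rfl⟩
    apply le_of_forall_pos_le_add
    intro ε hε
    -- Step 1: per-element eventual approximation
    have hch : ∀ a ∈ (c₁.1 n).1, ∃ m₀ : ℕ, ∀ m, m₀ ≤ m → ∃ y : X,
        ((y, ((m : ℝ≥0) + 1)⁻¹) : FB X) ∈ (c₂.1 m).1 ∧
        Q.d a.1 y < Q.dPtSet a.1 K₂ + ε / 2 := by
      intro a ha
      have hne' : {t | ∃ b ∈ K₂, t = Q.d a.1 b}.Nonempty := ⟨_, l₀, hl₀, rfl⟩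
      have hlt : Q.dPtSet a.1 K₂ < Q.dPtSet a.1 K₂ + ε / 4 := by linarith
      obtain ⟨t, ⟨b', hb', rfl⟩, hb'lt⟩ := exists_lt_of_csInf_lt hne' hlt
      have hYex : ∀ mm : ℕ, ∃ p ∈ (c₂.1 mm).1, Q.d p.1 b' < r mm * r mm / 2 :=
        fun mm => netG mm b' hb'
      choose P hP hPd using hYex
      have hPK : ∀ mm, (P mm).1 ∈ K₂ := fun mm => (memG mm (P mm) (hP mm)).1
      have hconv : ∀ δ : ℝ, 0 < δ → ∃ N, ∀ mm, N ≤ mm → Q.d (P mm).1 b' < δ := by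
        intro δ hδ
        obtain ⟨N, hN⟩ := hrsmall δ hδ
        refine ⟨N, fun mm hmm => lt_of_lt_of_le (hPd mm) ?_⟩
        have h1 := hranti N mm hmm
        have h2 := hrpos mm
        have h3 := hrle1 mm
        nlinarith
      obtain ⟨m₀, _, hm₀⟩ := Q.cluster hT1 h2.2 (fun mm => (P mm).1) hPK b' hconv
        (ε / 4) (by linarith) 0
      refine ⟨m₀, fun m hm => ⟨(P m₀).1, persistG m₀ m hm (P m₀) (hP m₀), ?_⟩⟩
      calc Q.d a.1 (P m₀).1 ≤ Q.d a.1 b' + Q.d b' (P m₀).1 := Q.triangle _ _ _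
        _ < (Q.dPtSet a.1 K₂ + ε / 4) + ε / 4 := add_lt_add hb'lt hm₀
        _ = Q.dPtSet a.1 K₂ + ε / 2 := by ring
    -- Step 2: a uniform stage `M`
    have hM : ∃ M : ℕ, ∀ a ∈ (c₁.1 n).1, ∀ m, M ≤ m → ∃ y : X,
        ((y, ((m : ℝ≥0) + 1)⁻¹) : FB X) ∈ (c₂.1 m).1 ∧
        Q.d a.1 y < Q.dPtSet a.1 K₂ + ε / 2 := by
      set f : FB X → ℕ := fun a => if h : a ∈ (c₁.1 n).1 then (hch a h).choose else 0 with hfdef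
      have hfin : (f '' (c₁.1 n).1).Finite := (c₁.1 n).2.1.image f
      obtain ⟨M, hMub⟩ := hfin.bddAbove
      refine ⟨M, fun a ha m hm => ?_⟩
      have hfa : f a ≤ M := hMub ⟨a, ha, rfl⟩
      have hfa2 : f a = (hch a ha).choose := by rw [hfdef]; simp [ha]
      exact (hch a ha).choose_spec m (le_trans (hfa2 ▸ hfa) hm)
    obtain ⟨M, hM⟩ := hM
    -- Step 3: choose a good stage `m`
    set m := max M (2 * n + 1) with hmdef
    have hmM : M ≤ m := le_max_left _ _
    have hmn : n ≤ m := le_trans (by omega) (le_max_right _ _)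
    have hr2n : r (2 * n + 1) = r n / 2 := by
      rw [hrdef]
      have h1 : ((2 * n + 1 : ℕ) : ℝ) + 1 = 2 * ((n : ℝ) + 1) := by push_cast; ring
      simp only []
      rw [h1, mul_inv]
      ring
    have hrm_half : r m ≤ r n / 2 := le_of_le_of_eq (hranti (2 * n + 1) m (le_max_right _ _)) hr2n
    have hBHd : Bv ≤ Q.Hd K₁ K₂ := by rw [hHd]; exact le_max_right _ _
    have hAHd : A ≤ Q.Hd K₁ K₂ := by rw [hHd]; exact le_max_left _ _
    have key : Q.Hq (c₁.1 n) (c₂.1 m) ≤ Q.Hd K₁ K₂ + ε := by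
      apply Q.Hq_le
      · intro a ha
        obtain ⟨y, hymem, hylt⟩ := hM a ha m hmM
        obtain ⟨haK, ha2⟩ := memF n a ha
        refine ⟨_, hymem, hqle a _ _ ?_ ?_ (by linarith)⟩
        · show ((((m : ℝ≥0) + 1)⁻¹ : ℝ≥0) : ℝ) ≤ (a.2 : ℝ)
          rw [hrcoe m, ha2]
          exact hranti n m hmn
        · show Q.d a.1 y + (((((m : ℝ≥0) + 1)⁻¹ : ℝ≥0) : ℝ) - (a.2 : ℝ)) ≤ Q.Hd K₁ K₂ + ε
          rw [hrcoe m, ha2]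
          have h5 := hranti n m hmn
          have h6 := hBLe a.1 haK
          linarith
      · intro b hb
        obtain ⟨hbK, hb2⟩ := memG m b hb
        have hne'' : {t | ∃ a ∈ K₁, t = Q.d a b.1}.Nonempty := ⟨_, k₀, hk₀, rfl⟩
        have hlt'' : Q.dSetPt K₁ b.1 < Q.dSetPt K₁ b.1 + ε / 4 := by linarith
        obtain ⟨t, ⟨k', hk', rfl⟩, hk'lt⟩ := exists_lt_of_csInf_lt hne'' hlt''
        obtain ⟨p, hp, hpd⟩ := netF n k' hk'
        obtain ⟨hpK, hp2⟩ := memF n p hp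
        refine ⟨p, hp, hqle p b _ ?_ ?_ (by linarith)⟩
        · rw [hb2, hp2]; exact hranti n m hmn
        · rw [hb2, hp2]
          have h5 : Q.d p.1 b.1 ≤ Q.d p.1 k' + Q.d k' b.1 := Q.triangle _ _ _
          have h6 := hALe b.1 hbK
          have h7 : r n * r n / 2 ≤ r n / 2 := by nlinarith [hrpos n, hrle1 n]
          linarith
    exact le_trans (csInf_le (Q.Dchain_inner_bddBelow c₁ c₂ n) ⟨m, rfl⟩) (by linarith)
  · -- `Hd ≤ Dchain`
    rw [hHd]
    apply max_le
    · -- `A ≤ Dchain`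
      apply le_of_forall_pos_le_add
      intro ε hε
      obtain ⟨n, hn⟩ := hrsmall (ε / 2) (by linarith)
      have hkey : A - ε ≤ sInf {s | ∃ m, s = Q.Hq (c₁.1 n) (c₂.1 m)} := by
        refine le_csInf ⟨_, ⟨0, rfl⟩⟩ ?_
        rintro s ⟨mm, rfl⟩
        obtain ⟨t, ⟨b', hb', rfl⟩, hb'gt⟩ :=
          exists_lt_of_lt_csSup hAne (show A - ε / 4 < A by linarith)
        obtain ⟨p, hp, hpd⟩ := netG mm b' hb'
        obtain ⟨hpK, hp2⟩ := memG mm p hp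
        apply Q.le_Hq_right hp
        intro a ha
        obtain ⟨haK, ha2⟩ := memF n a ha
        have h1 := Q.q_ge_d a p
        rw [ha2, hp2] at h1
        have h2 : Q.dSetPt K₁ p.1 ≤ Q.d a.1 p.1 := hdSetPt_le p.1 a.1 haK
        have h3 : Q.dSetPt K₁ b' - Q.d p.1 b' ≤ Q.dSetPt K₁ p.1 := by
          refine le_csInf ⟨_, k₀, hk₀, rfl⟩ ?_
          rintro t ⟨a', ha', rfl⟩
          have h4 := Q.triangle a' p.1 b'
          have h5 := hdSetPt_le b' a' ha'
          linarith
        have h4 : r mm * r mm / 2 ≤ r mm := by nlinarith [hrpos mm, hrle1 mm]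
        have h6 := hrpos mm
        linarith
      have := Q.le_Dchain c₁ c₂ hC hC0 hkey
      linarith
    · -- `Bv ≤ Dchain`
      apply le_of_forall_pos_le_add
      intro ε hε
      obtain ⟨t, ⟨k₁', hk₁', rfl⟩, hkgt⟩ :=
        exists_lt_of_lt_csSup hBne (show Bv - ε / 4 < Bv by linarith)
      have hPex : ∀ nn : ℕ, ∃ p ∈ (c₁.1 nn).1, Q.d p.1 k₁' < r nn * r nn / 2 :=
        fun nn => netF nn k₁' hk₁'
      choose P hP hPd using hPex
      have hPK : ∀ nn, (P nn).1 ∈ K₁ := fun nn => (memF nn (P nn) (hP nn)).1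
      have hconv : ∀ δ : ℝ, 0 < δ → ∃ N, ∀ nn, N ≤ nn → Q.d (P nn).1 k₁' < δ := by
        intro δ hδ
        obtain ⟨N, hN⟩ := hrsmall δ hδ
        refine ⟨N, fun nn hnn => lt_of_lt_of_le (hPd nn) ?_⟩
        have h1 := hranti N nn hnn
        have h2 := hrpos nn
        have h3 := hrle1 nn
        nlinarith
      obtain ⟨N, hN⟩ := hrsmall (ε / 4) (by linarith)
      obtain ⟨n, hnN, hndk⟩ := Q.cluster hT1 h1.2 (fun nn => (P nn).1) hPK k₁' hconv
        (ε / 4) (by linarith) N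
      have hrn : r n < ε / 4 := lt_of_le_of_lt (hranti N n hnN) hN
      have hkey : Bv - ε ≤ sInf {s | ∃ m, s = Q.Hq (c₁.1 n) (c₂.1 m)} := by
        refine le_csInf ⟨_, ⟨0, rfl⟩⟩ ?_
        rintro s ⟨mm, rfl⟩
        apply Q.le_Hq_left (hP n)
        intro b hb
        obtain ⟨hbK, hb2⟩ := memG mm b hb
        have ha2 := (memF n (P n) (hP n)).2
        have h1 := Q.q_ge_d (P n) b
        rw [ha2, hb2] at h1
        have h2 : Q.dPtSet k₁' K₂ - Q.d k₁' (P n).1 ≤ Q.d (P n).1 b.1 := by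
          have h3 := Q.triangle k₁' (P n).1 b.1
          have h4 := hdPtSet_le k₁' b.1 hbK
          linarith
        have h5 := hrpos mm
        linarith
      have := Q.le_Dchain c₁ c₂ hC hC0 hkey
      linarith
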